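/- arXiv:2008.06184 — 7 statements merged into one kernel-verified Lean document; each statement's English description precedes it below -/
import Mathlib

section
/- Let C ⊆ ℝ^d be convex, E ⊆ C, and x ∈ C. If F : C → ℝ^{d'} is strict inversely convexity preserving (i.e., F((a,b)) ⊆ (F(a),F(b)) for all a,b ∈ C), then x ∈ ri(co(E)) implies F(x) ∈ ri(co(F(E))). -/
open Set Finset Metric


lemma mem_intrinsicInterior_iff_ball' {V : Type*} [NormedAddCommGroup V] [NormedSpace ℝ V]
    {S : Set V} {p : V} :
    p ∈ intrinsicInterior ℝ S ↔ p ∈ affineSpan ℝ S ∧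
      ∃ ε > 0, ∀ w ∈ (affineSpan ℝ S : Set V), dist w p < ε → w ∈ S := by
  constructor
  · intro h
    obtain ⟨y, hy, rfl⟩ := mem_intrinsicInterior.1 h
    refine ⟨y.2, ?_⟩
    obtain ⟨ε, hε, hball⟩ := Metric.mem_nhds_iff.1 (mem_interior_iff_mem_nhds.1 hy)
    refine ⟨ε, hε, fun w hw hd => ?_⟩
    exact hball (show (⟨w, hw⟩ : affineSpan ℝ S) ∈ ball y ε by
      simpa [Metric.mem_ball, Subtype.dist_eq] using hd)
  · rintro ⟨hp, ε, hε, hb⟩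
    refine mem_intrinsicInterior.2 ⟨⟨p, hp⟩, mem_interior_iff_mem_nhds.2 (Metric.mem_nhds_iff.2
      ⟨ε, hε, fun w hw => hb w w.2 ?_⟩), rfl⟩
    simpa [Metric.mem_ball, Subtype.dist_eq] using hw

lemma exists_openSegment_rep {V : Type*} [NormedAddCommGroup V]
    [NormedSpace ℝ V] {S : Set V} {p y : V} (hp : p ∈ intrinsicInterior ℝ S) (hy : y ∈ S) :
    ∃ z ∈ S, ∃ t : ℝ, 0 < t ∧ t < 1 ∧ p = t • y + (1 - t) • z := by
  obtain ⟨hps, ε, hε, hb⟩ := mem_intrinsicInterior_iff_ball'.1 hp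
  set δ : ℝ := ε / (2 * (‖p - y‖ + 1)) with hδdef
  have hδ : 0 < δ := by positivity
  set z : V := p + δ • (p - y) with hz
  have hzspan : z ∈ affineSpan ℝ S := by
    have := (affineSpan ℝ S).smul_vsub_vadd_mem δ hps (subset_affineSpan ℝ S hy) hps
    simpa [vsub_eq_sub, vadd_eq_add, hz, add_comm] using this
  have hdist : dist z p < ε := by
    have h1 : dist z p = δ * ‖p - y‖ := by
      have he : p + δ • (p - y) - p = δ • (p - y) := by abel
      rw [hz, dist_eq_norm, he, norm_smul, Real.norm_eq_abs, abs_of_pos hδ]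
    rw [h1, hδdef, div_mul_eq_mul_div, div_lt_iff₀ (by positivity)]
    nlinarith [norm_nonneg (p - y), hε]
  have hzS : z ∈ S := hb z hzspan hdist
  have h1δ : (1 : ℝ) + δ ≠ 0 := by positivity
  refine ⟨z, hzS, δ / (1 + δ), by positivity, by rw [div_lt_one (by positivity)]; linarith, ?_⟩
  rw [hz]
  match_scalars <;> field_simp <;> ring

lemma mem_intrinsicInterior_of_combo {V : Type*} [NormedAddCommGroup V] [NormedSpace ℝ V]
    {T : Set V} (hT : Convex ℝ T) {q z p : V} (hq : q ∈ intrinsicInterior ℝ T) (hz : z ∈ T)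
    {t : ℝ} (ht0 : 0 < t) (ht1 : t < 1) (hp : p = t • q + (1 - t) • z) :
    p ∈ intrinsicInterior ℝ T := by
  obtain ⟨hqs, ε, hε, hb⟩ := mem_intrinsicInterior_iff_ball'.1 hq
  have hqT : q ∈ T := intrinsicInterior_subset hq
  have hpT : p ∈ T := hp ▸ hT hqT hz ht0.le (by linarith) (by ring)
  refine mem_intrinsicInterior_iff_ball'.2 ⟨subset_affineSpan ℝ T hpT, t * ε, by positivity, ?_⟩
  intro w hw hd
  set w' : V := t⁻¹ • (w - p) + q with hw'
  have hw'span : w' ∈ affineSpan ℝ T := by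
    have := (affineSpan ℝ T).smul_vsub_vadd_mem t⁻¹ hw (subset_affineSpan ℝ T hpT) hqs
    simpa [vsub_eq_sub, vadd_eq_add, hw'] using this
  have hdist : dist w' q < ε := by
    have h1 : dist w' q = t⁻¹ * ‖w - p‖ := by
      have he : t⁻¹ • (w - p) + q - q = t⁻¹ • (w - p) := by abel
      rw [hw', dist_eq_norm, he, norm_smul, Real.norm_eq_abs, abs_of_pos (inv_pos.2 ht0)]
    rw [dist_eq_norm] at hd
    rw [h1]
    calc t⁻¹ * ‖w - p‖ < t⁻¹ * (t * ε) := by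
          exact mul_lt_mul_of_pos_left hd (inv_pos.2 ht0)
      _ = ε := by field_simp
  have hw'T : w' ∈ T := hb w' hw'span hdist
  have hcombo : w = t • w' + (1 - t) • z := by
    rw [hw', hp]
    match_scalars <;> field_simp <;> ring
  rw [hcombo]
  exact hT hw'T hz ht0.le (by linarith) (by ring)


lemma sicp_image_convexHull {d d' : ℕ} (C : Set (Fin d → ℝ)) (hC : Convex ℝ C)
    (E : Set (Fin d → ℝ)) (hE : E ⊆ C) (F : (Fin d → ℝ) → (Fin d' → ℝ))
    (hF : ∀ a ∈ C, ∀ b ∈ C, F '' openSegment ℝ a b ⊆ openSegment ℝ (F a) (F b)) :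
    ∀ y ∈ convexHull ℝ E, F y ∈ convexHull ℝ (F '' E) := by
  have hSC : convexHull ℝ E ⊆ C := convexHull_min hE hC
  intro y hy
  classical
  obtain ⟨ι, _inst, w, zp, hw0, hw1, hzp, hsum⟩ := mem_convexHull_iff_exists_fintype.1 hy
  clear hy
  subst hsum
  have claim : ∀ (t : Finset ι) (w : ι → ℝ), (∀ i ∈ t, 0 ≤ w i) → (∑ i ∈ t, w i) = 1 →
      F (∑ i ∈ t, w i • zp i) ∈ convexHull ℝ (F '' E) := by
    intro t
    induction t using Finset.induction_on with
    | empty => intro w _ h1; simp at h1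
    | @insert a t ha IH =>
      intro w hw0 hw1
      rw [Finset.sum_insert ha] at hw1 ⊢
      have hwa0 : 0 ≤ w a := hw0 a (Finset.mem_insert_self a t)
      have hwt0 : ∀ i ∈ t, 0 ≤ w i := fun i hi => hw0 i (Finset.mem_insert_of_mem hi)
      rcases eq_or_lt_of_le hwa0 with hwa | hwa
      · -- w a = 0
        have h1 : (∑ i ∈ t, w i) = 1 := by linarith
        have := IH w hwt0 h1
        simpa [← hwa] using this
      · set c : ℝ := ∑ i ∈ t, w i with hc
        have hc0 : 0 ≤ c := Finset.sum_nonneg hwt0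
        rcases eq_or_lt_of_le hc0 with hczero | hcpos
        · -- all weights in t are zero, w a = 1
          have hz : ∀ i ∈ t, w i = 0 :=
            (Finset.sum_eq_zero_iff_of_nonneg hwt0).1 hczero.symm
          have hsumz : (∑ i ∈ t, w i • zp i) = 0 := by
            apply Finset.sum_eq_zero
            intro i hi; rw [hz i hi, zero_smul]
          have hwa1 : w a = 1 := by rw [← hczero] at hw1; linarith
          rw [hsumz, hwa1, add_zero, one_smul]
          exact subset_convexHull ℝ (F '' E) (mem_image_of_mem F (hzp a))
        · -- 0 < c, 0 < w a, w a + c = 1, w a < 1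
          have hwa1 : w a = 1 - c := by linarith
          have hclt1 : c < 1 := by linarith
          set y' : Fin d → ℝ := ∑ i ∈ t, (w i / c) • zp i with hy'
          have hy'co : y' ∈ convexHull ℝ E := by
            apply (convex_convexHull ℝ E).sum_mem
              (fun i hi => div_nonneg (hwt0 i hi) hc0)
            · rw [← Finset.sum_div, ← hc, div_self (ne_of_gt hcpos)]
            · exact fun i hi => subset_convexHull ℝ E (hzp i)
          have hIH : F y' ∈ convexHull ℝ (F '' E) := by
            apply IH (fun i => w i / c) (fun i hi => div_nonneg (hwt0 i hi) hc0)
            rw [← Finset.sum_div, ← hc, div_self (ne_of_gt hcpos)]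
          have hcy' : c • y' = ∑ i ∈ t, w i • zp i := by
            rw [hy', Finset.smul_sum]
            apply Finset.sum_congr rfl
            intro i hi
            rw [smul_smul]
            congr 1
            field_simp
          have hseg : w a • zp a + ∑ i ∈ t, w i • zp i ∈ openSegment ℝ (zp a) y' := by
            rw [← hcy']
            exact ⟨w a, c, hwa, hcpos, hw1, rfl⟩
          have hFseg := hF (zp a) (hE (hzp a)) y' (hSC hy'co) (mem_image_of_mem F hseg)
          have hFa : F (zp a) ∈ convexHull ℝ (F '' E) :=
            subset_convexHull ℝ (F '' E) (mem_image_of_mem F (hzp a))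
          exact (convex_convexHull ℝ (F '' E)).openSegment_subset hFa hIH hFseg
  exact claim Finset.univ w (fun i _ => hw0 i) hw1


/-- A strict inversely convexity preserving map `F : C → ℝ^{d'}` carries points of
`ri(co(E))` (for `E ⊆ C`) into `ri(co(F(E)))`. -/

theorem sicp_preserves_ri {d d' : ℕ} (C : Set (Fin d → ℝ)) (hC : Convex ℝ C)
    (E : Set (Fin d → ℝ)) (hE : E ⊆ C)
    (F : (Fin d → ℝ) → (Fin d' → ℝ))
    (hF : ∀ a ∈ C, ∀ b ∈ C, F '' openSegment ℝ a b ⊆ openSegment ℝ (F a) (F b))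
    (x : Fin d → ℝ) (hx : x ∈ C)
    (hxri : x ∈ intrinsicInterior ℝ (convexHull ℝ E)) :
    F x ∈ intrinsicInterior ℝ (convexHull ℝ (F '' E)) := by
  classical
  set S : Set (Fin d → ℝ) := convexHull ℝ E with hS
  set T : Set (Fin d' → ℝ) := convexHull ℝ (F '' E) with hT
  have hTconv : Convex ℝ T := convex_convexHull ℝ (F '' E)
  have hSC : S ⊆ C := convexHull_min hE hC
  have hA : ∀ y ∈ S, F y ∈ T := sicp_image_convexHull C hC E hE F hF
  have hxS : x ∈ S := intrinsicInterior_subset hxri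
  have hpT : F x ∈ T := hA x hxS
  -- pick a point in the intrinsic interior of T
  obtain ⟨q₀, hq₀ri⟩ := Set.Nonempty.intrinsicInterior hTconv ⟨F x, hpT⟩
  have hq₀T : q₀ ∈ T := intrinsicInterior_subset hq₀ri
  -- represent q₀ as a convex combination of points of F '' E
  obtain ⟨ι, _inst, μ, g, hμ0, hμ1, hgmem, hgsum⟩ := mem_convexHull_iff_exists_fintype.1 hq₀T
  simp only [Set.mem_image] at hgmem
  choose a haE hFa using hgmem
  -- for each j, express F x strictly between F (a j) and a point of T
  have hstep : ∀ j : ι, ∃ s : ℝ, 0 < s ∧ s < 1 ∧ ∃ cc ∈ T, F x = s • g j + (1 - s) • cc := by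
    intro j
    obtain ⟨z, hzS, t, ht0, ht1, hxeq⟩ :=
      exists_openSegment_rep hxri (subset_convexHull ℝ E (haE j))
    have hxseg : x ∈ openSegment ℝ (a j) z :=
      ⟨t, 1 - t, ht0, by linarith, by ring, hxeq.symm⟩
    obtain ⟨u, v, hu, hv, huv, heq⟩ :=
      hF (a j) (hE (haE j)) z (hSC hzS) (mem_image_of_mem F hxseg)
    exact ⟨u, hu, by linarith, F z, hA z hzS, by rw [hFa j] at heq; rw [← heq]; congr 1; · rw [show (1:ℝ) - u = v by linarith]⟩
  choose s hs0 hs1 c hcT hFxeq using hstep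
  -- the scalar α
  set α : ℝ := ∑ j : ι, μ j / s j with hα
  have hιne : ∃ j : ι, 0 < μ j := by
    by_contra h
    push_neg at h
    have hz : ∀ j, μ j = 0 := fun j => le_antisymm (h j) (hμ0 j)
    simp [hz] at hμ1
  have hα1 : 1 < α := by
    rw [hα, ← hμ1]
    apply Finset.sum_lt_sum
    · intro j _
      rw [le_div_iff₀ (hs0 j)]
      exact mul_le_of_le_one_right (hμ0 j) (hs1 j).le
    · obtain ⟨j, hj⟩ := hιne
      refine ⟨j, Finset.mem_univ j, ?_⟩
      rw [lt_div_iff₀ (hs0 j)]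
      nlinarith [hs1 j]
  have hαne : α - 1 ≠ 0 := by linarith
  set β : ι → ℝ := fun j => μ j / s j * (1 - s j) with hβ
  have hβ0 : ∀ j, 0 ≤ β j := fun j =>
    mul_nonneg (div_nonneg (hμ0 j) (hs0 j).le) (by linarith [hs1 j])
  have hβsum : (∑ j : ι, β j) = α - 1 := by
    rw [hα, ← hμ1, ← Finset.sum_sub_distrib]
    apply Finset.sum_congr rfl
    intro j _
    simp only [hβ]
    have hsne : s j ≠ 0 := ne_of_gt (hs0 j)
    field_simp
  -- key identity per index
  have key : ∀ j : ι, μ j • g j = (μ j / s j) • F x - β j • c j := by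
    intro j
    have hsne : s j ≠ 0 := ne_of_gt (hs0 j)
    rw [hFxeq j]
    simp only [hβ]
    match_scalars <;> (field_simp; try ring)
  set W : Fin d' → ℝ := ∑ j : ι, β j • c j with hW
  have hq0 : q₀ = α • F x - W := by
    rw [← hgsum, hW, hα]
    rw [Finset.sum_congr rfl (fun j _ => key j), Finset.sum_sub_distrib, ← Finset.sum_smul]
  set z : Fin d' → ℝ := (α - 1)⁻¹ • W with hz
  have hzT : z ∈ T := by
    have hsum1 : (∑ j : ι, β j / (α - 1)) = 1 := by
      rw [← Finset.sum_div, hβsum, div_self hαne]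
    have := hTconv.sum_mem (t := Finset.univ)
      (fun j _ => div_nonneg (hβ0 j) (by linarith : (0:ℝ) ≤ α - 1)) hsum1
      (fun j _ => hcT j)
    have heq : (∑ j : ι, (β j / (α - 1)) • c j) = z := by
      rw [hz, hW, Finset.smul_sum]
      apply Finset.sum_congr rfl
      intro j _
      rw [smul_smul, div_eq_mul_inv, mul_comm]
    rwa [heq] at this
  have hWz : W = (α - 1) • z := by
    rw [hz, smul_smul, mul_inv_cancel₀ hαne, one_smul]
  have hfinal : F x = α⁻¹ • q₀ + (1 - α⁻¹) • z := by
    rw [hq0, hWz]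
    have : α ≠ 0 := by linarith
    match_scalars <;> (field_simp; try ring)
  exact mem_intrinsicInterior_of_combo hTconv hq₀ri hzT
    (inv_pos.2 (by linarith)) (inv_lt_one_of_one_lt₀ hα1) hfinal
end

section
/- Let C ⊆ ℝ^d be convex, E ⊆ C, and F : C → ℝ^{d'} a continuous map that is inversely convexity preserving (F([a,b]) ⊆ [F(a),F(b)] for all a,b ∈ C). If x₀ ∈ cl(co(E)) ∩ C, then F(x₀) ∈ cl(co(F(E))). -/
/-- A continuous inversely convexity preserving map `F : C → ℝ^{d'}` carries points of
`cl(co(E))` (for `E ⊆ C`, assuming `cl(co(E)) ⊆ C`) into `cl(co(F(E)))`. -/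
theorem continuous_icp_preserves_cl {d d' : ℕ} (C E : Set (Fin d → ℝ))
    (hC : Convex ℝ C) (hE : E ⊆ C)
    (hcl : closure (convexHull ℝ E) ⊆ C)
    (F : (Fin d → ℝ) → (Fin d' → ℝ)) (hcont : ContinuousOn F C)
    (hicp : ∀ a ∈ C, ∀ b ∈ C, F '' segment ℝ a b ⊆ segment ℝ (F a) (F b))
    (x₀ : Fin d → ℝ) (hx₀ : x₀ ∈ closure (convexHull ℝ E) ∩ C) :
    F x₀ ∈ closure (convexHull ℝ (F '' E)) := by
  have hcoC : convexHull ℝ E ⊆ C := subset_closure.trans hcl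
  -- The set S = C ∩ F⁻¹(co(F(E))) is convex and contains E
  have hSconv : Convex ℝ (C ∩ F ⁻¹' (convexHull ℝ (F '' E))) := by
    intro a ha b hb s t hs ht hst
    refine ⟨hC ha.1 hb.1 hs ht hst, ?_⟩
    have hseg : s • a + t • b ∈ segment ℝ a b := ⟨s, t, hs, ht, hst, rfl⟩
    have := hicp a ha.1 b hb.1 ⟨_, hseg, rfl⟩
    exact (convex_convexHull ℝ (F '' E)).segment_subset ha.2 hb.2 this
  have hES : E ⊆ C ∩ F ⁻¹' (convexHull ℝ (F '' E)) := fun x hx =>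
    ⟨hE hx, subset_convexHull ℝ _ ⟨x, hx, rfl⟩⟩
  have hhull : convexHull ℝ E ⊆ C ∩ F ⁻¹' (convexHull ℝ (F '' E)) :=
    convexHull_min hES hSconv
  -- continuity step
  have hcw : ContinuousWithinAt F (convexHull ℝ E) x₀ :=
    (hcont x₀ hx₀.2).mono hcoC
  have h1 : F x₀ ∈ closure (F '' (convexHull ℝ E)) :=
    hcw.mem_closure_image hx₀.1
  refine closure_mono ?_ h1
  rintro _ ⟨y, hy, rfl⟩
  exact (hhull hy).2
end

section
/- A map g : C → ℝ^{d'} on a convex set C ⊆ ℝ^d preserves convexity (the image of every convex subset of C is convex) if and only if [g(x), g(y)] ⊆ g([x,y]) for all x, y ∈ C. -/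
/-- `g` preserves convexity (images of convex subsets of `C` are convex) iff
`[g(x), g(y)] ⊆ g([x,y])` for all `x, y ∈ C`. -/
theorem convexity_preserving_iff_segment {d d' : ℕ} (C : Set (Fin d → ℝ))
    (hC : Convex ℝ C) (g : (Fin d → ℝ) → (Fin d' → ℝ)) :
    (∀ E ⊆ C, Convex ℝ E → Convex ℝ (g '' E)) ↔
    (∀ x ∈ C, ∀ y ∈ C, segment ℝ (g x) (g y) ⊆ g '' segment ℝ x y) := by
  constructor
  · intro h x hx y hy
    have hseg : segment ℝ x y ⊆ C := hC.segment_subset hx hy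
    have hconv := h _ hseg (convex_segment x y)
    exact hconv.segment_subset ⟨x, left_mem_segment ℝ x y, rfl⟩
      ⟨y, right_mem_segment ℝ x y, rfl⟩
  · intro h E hE hEc
    rw [convex_iff_segment_subset]
    rintro _ ⟨x, hx, rfl⟩ _ ⟨y, hy, rfl⟩
    exact (h x (hE hx) y (hE hy)).trans
      (Set.image_mono (f := g) (hEc.segment_subset hx hy))
end

section
/- Let X and X' be perspective functions on ℝ^{d+1} and ℝ^{d'+1} respectively, and let f : dom X → dom X' satisfy the homogeneity condition: for every s ∈ dom X and λ > 0 there exists μ > 0 (depending on λ, s) with f(λ s) = μ f(s). Then there exists a unique map F : Im X → Im X' such that F ∘ X = X' ∘ f. Moreover if f is strict inversely convexity preserving, so is F. -/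
/-- The perspective function `X(s) = (s^1/s^0, ..., s^d/s^0)` on `{s : s^0 > 0}`. -/
noncomputable def persp (d : ℕ) (s : Fin (d + 1) → ℝ) : Fin d → ℝ := fun i => s i.succ / s 0

/-- Lift a point of the image back to the slice `s 0 = 1`. -/
noncomputable def perspLift {d : ℕ} (x : Fin d → ℝ) : Fin (d + 1) → ℝ := Fin.cons 1 x

lemma perspLift_zero {d : ℕ} (x : Fin d → ℝ) : perspLift x 0 = 1 := rfl

lemma persp_perspLift {d : ℕ} (x : Fin d → ℝ) : persp d (perspLift x) = x := by
  funext i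
  simp [persp, perspLift]

lemma persp_smul {d : ℕ} (s : Fin (d + 1) → ℝ) {μ : ℝ} (hμ : μ ≠ 0) :
    persp d (μ • s) = persp d s := by
  funext i
  simp only [persp, Pi.smul_apply, smul_eq_mul]
  exact mul_div_mul_left _ _ hμ

lemma perspLift_persp {d : ℕ} (s : Fin (d + 1) → ℝ) (hs : 0 < s 0) :
    perspLift (persp d s) = (s 0)⁻¹ • s := by
  funext i
  refine Fin.cases ?_ (fun j => ?_) i
  · simp [perspLift, inv_mul_cancel₀ hs.ne']
  · simp [perspLift, persp, div_eq_inv_mul]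

lemma persp_openSegment {n : ℕ} {u v w : Fin (n + 1) → ℝ} (hu : 0 < u 0) (hv : 0 < v 0)
    (hw : w ∈ openSegment ℝ u v) :
    persp n w ∈ openSegment ℝ (persp n u) (persp n v) := by
  obtain ⟨a, b, ha, hb, hab, rfl⟩ := hw
  have hw0 : 0 < a * u 0 + b * v 0 := by positivity
  refine ⟨a * u 0 / (a * u 0 + b * v 0), b * v 0 / (a * u 0 + b * v 0), by positivity,
    by positivity, by field_simp, ?_⟩
  funext i
  simp only [persp, Pi.add_apply, Pi.smul_apply, smul_eq_mul]
  field_simp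

/-- If `f : dom X → dom X'` satisfies the positive-homogeneity condition
`f(λs) = μ_{λ,s} f(s)`, there is a unique induced map `F` with `F ∘ X = X' ∘ f`;
moreover if `f` is strict inversely convexity preserving, so is `F`. -/
theorem induced_map_exists_unique {d d' : ℕ}
    (f : (Fin (d + 1) → ℝ) → (Fin (d' + 1) → ℝ))
    (hmap : ∀ s : Fin (d + 1) → ℝ, 0 < s 0 → 0 < f s 0)
    (hhom : ∀ s : Fin (d + 1) → ℝ, 0 < s 0 → ∀ l : ℝ, 0 < l →
      ∃ μ : ℝ, 0 < μ ∧ f (l • s) = μ • f s) :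
    ∃ F : (Fin d → ℝ) → (Fin d' → ℝ),
      (∀ s : Fin (d + 1) → ℝ, 0 < s 0 → F (persp d s) = persp d' (f s)) ∧
      (∀ G : (Fin d → ℝ) → (Fin d' → ℝ),
        (∀ s : Fin (d + 1) → ℝ, 0 < s 0 → G (persp d s) = persp d' (f s)) →
        ∀ s : Fin (d + 1) → ℝ, 0 < s 0 → G (persp d s) = F (persp d s)) ∧
      ((∀ a : Fin (d + 1) → ℝ, 0 < a 0 → ∀ b : Fin (d + 1) → ℝ, 0 < b 0 →
          f '' openSegment ℝ a b ⊆ openSegment ℝ (f a) (f b)) →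
        ∀ x ∈ persp d '' {s : Fin (d + 1) → ℝ | 0 < s 0},
        ∀ y ∈ persp d '' {s : Fin (d + 1) → ℝ | 0 < s 0},
          F '' openSegment ℝ x y ⊆ openSegment ℝ (F x) (F y)) := by
  refine ⟨fun x => persp d' (f (perspLift x)), ?_, ?_, ?_⟩
  · -- compatibility
    intro s hs
    obtain ⟨μ, hμ, hfs⟩ := hhom s hs (s 0)⁻¹ (inv_pos.mpr hs)
    show persp d' (f (perspLift (persp d s))) = persp d' (f s)
    rw [perspLift_persp s hs, hfs, persp_smul _ hμ.ne']
  · -- uniqueness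
    intro G hG s hs
    obtain ⟨μ, hμ, hfs⟩ := hhom s hs (s 0)⁻¹ (inv_pos.mpr hs)
    rw [hG s hs]
    show persp d' (f s) = persp d' (f (perspLift (persp d s)))
    rw [perspLift_persp s hs, hfs, persp_smul _ hμ.ne']
  · -- strict inverse convexity preservation
    rintro hf x ⟨sx, hsx, rfl⟩ y ⟨sy, hsy, rfl⟩ w ⟨z, hz, rfl⟩
    have h1 : (0:ℝ) < perspLift (persp d sx) 0 := by rw [perspLift_zero]; norm_num
    have h2 : (0:ℝ) < perspLift (persp d sy) 0 := by rw [perspLift_zero]; norm_num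
    have hzseg : perspLift z ∈ openSegment ℝ (perspLift (persp d sx)) (perspLift (persp d sy)) := by
      obtain ⟨a, b, ha, hb, hab, rfl⟩ := hz
      refine ⟨a, b, ha, hb, hab, ?_⟩
      funext i
      refine Fin.cases ?_ (fun j => ?_) i
      · simp [perspLift, hab]
      · simp [perspLift]
    have hfz := hf _ h1 _ h2 ⟨perspLift z, hzseg, rfl⟩
    exact persp_openSegment (hmap _ h1) (hmap _ h2) hfz
end

section
/- Suppose f : dom X → dom X' satisfies the positive homogeneity condition and has the form f(s) = (f^0(s)/L^0(s))·L(s), where L : ℝ^{d+1} → ℝ^{d'+1} is linear, L^0 (first coordinate of L) and f^0 are strictly positive on {s^0 > 0}, and f^0 satisfies the same homogeneity condition. Then the induced map F (with F ∘ X = X' ∘ f) equals a fractional-linear map F(x) = (b + A(x))/(a_{00} + B(x)) with positive denominator on Im X, and in particular F is strict inversely convexity preserving. -/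
/-- The linear embedding `x ↦ (0, x)`. -/
def consZero (d : ℕ) : (Fin d → ℝ) →ₗ[ℝ] (Fin (d + 1) → ℝ) where
  toFun x := Fin.cons 0 x
  map_add' x y := by
    funext j
    refine Fin.cases ?_ ?_ j <;> simp
  map_smul' c x := by
    funext j
    refine Fin.cases ?_ ?_ j <;> simp

lemma consZero_add_one {d : ℕ} (x : Fin d → ℝ) :
    consZero d x + Fin.cons 1 0 = Fin.cons 1 x := by
  funext j
  refine Fin.cases ?_ ?_ j <;> simp [consZero]

lemma decomp {d : ℕ} (s : Fin (d + 1) → ℝ) (hs : 0 < s 0) :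
    s = s 0 • (Fin.cons 1 (persp d s) : Fin (d + 1) → ℝ) := by
  have h0 : s 0 ≠ 0 := hs.ne'
  funext j
  refine Fin.cases ?_ ?_ j <;> simp [persp]
  intro i
  field_simp

/-- If `f(s) = (f⁰(s)/L⁰(s))·L(s)` with `L` linear and `f⁰, L⁰ > 0` on `{s⁰ > 0}`
(`f⁰` positively homogeneous), then the induced map `F` (with `F ∘ X = X' ∘ f`) is a
fractional-linear map with positive denominator, hence strict inversely convexity
preserving. -/
theorem fractional_form_induces_sicp {d d' : ℕ}
    (L : (Fin (d + 1) → ℝ) →ₗ[ℝ] (Fin (d' + 1) → ℝ))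
    (f0 : (Fin (d + 1) → ℝ) → ℝ)
    (hL0 : ∀ s : Fin (d + 1) → ℝ, 0 < s 0 → 0 < L s 0)
    (hf0 : ∀ s : Fin (d + 1) → ℝ, 0 < s 0 → 0 < f0 s)
    (hhom0 : ∀ s : Fin (d + 1) → ℝ, 0 < s 0 → ∀ l : ℝ, 0 < l →
      ∃ μ : ℝ, 0 < μ ∧ f0 (l • s) = μ * f0 s)
    (f : (Fin (d + 1) → ℝ) → (Fin (d' + 1) → ℝ))
    (hf : ∀ s : Fin (d + 1) → ℝ, 0 < s 0 → f s = (f0 s / L s 0) • L s) :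
    ∃ (A : (Fin d → ℝ) →ₗ[ℝ] (Fin d' → ℝ)) (B : (Fin d → ℝ) →ₗ[ℝ] ℝ)
      (b : Fin d' → ℝ) (c : ℝ),
      (∀ x ∈ persp d '' {s : Fin (d + 1) → ℝ | 0 < s 0}, 0 < B x + c) ∧
      (∀ s : Fin (d + 1) → ℝ, 0 < s 0 →
        persp d' (f s) = (B (persp d s) + c)⁻¹ • (A (persp d s) + b)) ∧
      (∀ x ∈ persp d '' {s : Fin (d + 1) → ℝ | 0 < s 0},
       ∀ y ∈ persp d '' {s : Fin (d + 1) → ℝ | 0 < s 0},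
        (fun z => (B z + c)⁻¹ • (A z + b)) '' openSegment ℝ x y ⊆
          openSegment ℝ ((B x + c)⁻¹ • (A x + b)) ((B y + c)⁻¹ • (A y + b))) := by
  set A : (Fin d → ℝ) →ₗ[ℝ] (Fin d' → ℝ) :=
    (LinearMap.funLeft ℝ ℝ (Fin.succ : Fin d' → Fin (d' + 1))).comp (L.comp (consZero d)) with hA
  set B : (Fin d → ℝ) →ₗ[ℝ] ℝ :=
    (LinearMap.proj (0 : Fin (d' + 1))).comp (L.comp (consZero d)) with hB
  set b : Fin d' → ℝ := fun i => L (Fin.cons 1 0) i.succ with hb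
  set c : ℝ := L (Fin.cons 1 0) 0 with hc
  have hBc : ∀ x : Fin d → ℝ, B x + c = L (Fin.cons 1 x) 0 := by
    intro x
    rw [← consZero_add_one x, map_add]
    simp [hB, hc]
  have hAb : ∀ (x : Fin d → ℝ) (i : Fin d'), A x i + b i = L (Fin.cons 1 x) i.succ := by
    intro x i
    rw [← consZero_add_one x, map_add]
    simp [hA, hb, LinearMap.funLeft]
  have hBcpos : ∀ x : Fin d → ℝ, 0 < B x + c := by
    intro x
    rw [hBc]
    exact hL0 _ (by simp)
  refine ⟨A, B, b, c, fun x _ => hBcpos x, ?_, ?_⟩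
  · intro s hs
    have hL0s := hL0 s hs
    have hf0s := hf0 s hs
    have hLs : ∀ j, L s j = s 0 * L (Fin.cons 1 (persp d s)) j := by
      intro j
      conv_lhs => rw [decomp s hs]
      simp
    have h2 : f0 s / L s 0 ≠ 0 := (div_pos hf0s hL0s).ne'
    funext i
    rw [hf s hs]
    simp only [persp, Pi.smul_apply, smul_eq_mul]
    rw [mul_div_mul_left _ _ h2, hLs, hLs 0,
      mul_div_mul_left _ _ hs.ne', ← hAb, ← hBc]
    simp [div_eq_inv_mul]
  · intro x _ y _ w hw
    obtain ⟨z, hz, rfl⟩ := hw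
    obtain ⟨a, a', ha, ha', hsum, rfl⟩ := hz
    have hp := hBcpos x
    have hq := hBcpos y
    set p : ℝ := B x + c with hpd
    set q : ℝ := B y + c with hqd
    set u : Fin d' → ℝ := A x + b with hu
    set v : Fin d' → ℝ := A y + b with hv
    have hD : B (a • x + a' • y) + c = a * p + a' * q := by
      simp only [map_add, map_smul, smul_eq_mul, hpd, hqd]
      linear_combination (-c) * hsum
    have hAz : A (a • x + a' • y) + b = a • u + a' • v := by
      rw [hu, hv]
      simp only [map_add, map_smul]
      match_scalars <;> linarith
    set D : ℝ := a * p + a' * q with hDd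
    have hDpos : 0 < D := by positivity
    have hp' : p ≠ 0 := hp.ne'
    have hq' : q ≠ 0 := hq.ne'
    have hD' : D ≠ 0 := hDpos.ne'
    clear_value p q D
    refine ⟨a * p / D, a' * q / D, by positivity, by positivity,
      by rw [← add_div, ← hDd, div_self hD'], ?_⟩
    show _ = (B (a • x + a' • y) + c)⁻¹ • (A (a • x + a' • y) + b)
    rw [hD, hAz]
    match_scalars <;> field_simp <;> ring
end

section
/- Change-of-numeraire invariance of the local arbitrage-free property: let E ⊆ ℝ^{d+1} be a set of price vectors with all coordinates of interest positive, and let s ∈ E with s^0 > 0, s^1 > 0. If X(s) ∈ ri(co(X(E))) (arbitrage-free with numeraire coordinate 0), then Y(s) ∈ ri(co(Y(E))) (arbitrage-free with numeraire coordinate 1), where X and Y are the perspective functions with respect to coordinates 0 and 1 respectively. -/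
/-- The perspective function w.r.t. the second coordinate:
`Y(s) = (s^0/s^1, s^2/s^1, ..., s^d/s^1)`. -/
noncomputable def perspY (d : ℕ) (s : Fin (d + 2) → ℝ) : Fin (d + 1) → ℝ :=
  fun i => (if i = 0 then s 0 else s i.succ) / s 1

open Set Finset

noncomputable def Gmap {n : ℕ} (x : Fin (n + 1) → ℝ) : Fin (n + 1) → ℝ :=
  fun i => (if i = 0 then 1 else x i) / x 0

private lemma aux_div (a b xi yi x0 y0 m : ℝ) (hx0 : x0 ≠ 0) (hy0 : y0 ≠ 0) (hm : m ≠ 0) :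
    (a * xi + b * yi) / m = a * x0 / m * (xi / x0) + b * y0 / m * (yi / y0) := by
  field_simp

lemma Gmap_invol {n : ℕ} {x : Fin (n + 1) → ℝ} (hx : x 0 ≠ 0) : Gmap (Gmap x) = x := by
  funext i
  simp only [Gmap]
  rcases eq_or_ne i 0 with rfl | hi
  · simp [hx]
  · simp only [if_neg hi, if_pos rfl]
    field_simp
    simp

lemma Gmap_zero_pos {n : ℕ} {x : Fin (n + 1) → ℝ} (hx : 0 < x 0) : 0 < Gmap x 0 := by
  simp only [Gmap, if_pos rfl]
  positivity

lemma Gmap_continuousOn {n : ℕ} :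
    ContinuousOn (Gmap (n := n)) {x | 0 < x 0} := by
  apply continuousOn_pi.2
  intro i
  apply ContinuousOn.div
  · rcases eq_or_ne i 0 with rfl | hi
    · simp only [if_pos rfl]; exact continuousOn_const
    · simp only [if_neg hi]; exact (continuous_apply i).continuousOn
  · exact (continuous_apply 0).continuousOn
  · exact fun x hx => ne_of_gt hx

lemma Gmap_hull {n : ℕ} {S : Set (Fin (n + 1) → ℝ)} (hS : ∀ x ∈ S, 0 < x 0) :
    convexHull ℝ S ⊆ {x | 0 < x 0 ∧ Gmap x ∈ convexHull ℝ (Gmap '' S)} := by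
  apply convexHull_min
  · intro e he
    exact ⟨hS e he, subset_convexHull ℝ _ (Set.mem_image_of_mem _ he)⟩
  · rintro x ⟨hx0, hxG⟩ y ⟨hy0, hyG⟩ a b ha hb hab
    have hm0 : 0 < a * x 0 + b * y 0 := by
      rcases eq_or_lt_of_le ha with h0 | ha'
      · have : b = 1 := by linarith
        simp [← h0, this, hy0]
      · have h1 : 0 < a * x 0 := mul_pos ha' hx0
        have h2 : 0 ≤ b * y 0 := mul_nonneg hb hy0.le
        linarith
    have hz0 : 0 < (a • x + b • y) 0 := by
      simpa [Pi.add_apply, Pi.smul_apply, smul_eq_mul] using hm0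
    refine ⟨hz0, ?_⟩
    have key : Gmap (a • x + b • y) =
        (a * x 0 / (a * x 0 + b * y 0)) • Gmap x + (b * y 0 / (a * x 0 + b * y 0)) • Gmap y := by
      funext i
      simp only [Gmap, Pi.add_apply, Pi.smul_apply, smul_eq_mul]
      rcases eq_or_ne i 0 with rfl | hi
      · simp only [if_pos rfl]
        have := aux_div a b 1 1 (x 0) (y 0) (a * x 0 + b * y 0)
          (ne_of_gt hx0) (ne_of_gt hy0) (ne_of_gt hm0)
        rw [show a * 1 + b * 1 = 1 by linarith] at this
        exact this
      · simp only [if_neg hi]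
        exact aux_div a b (x i) (y i) (x 0) (y 0) (a * x 0 + b * y 0)
          (ne_of_gt hx0) (ne_of_gt hy0) (ne_of_gt hm0)
    rw [key]
    refine (convex_convexHull ℝ _) hxG hyG (by positivity) (by positivity) ?_
    rw [← add_div, div_self (ne_of_gt hm0)]

lemma Gmap_span {n : ℕ} {S : Set (Fin (n + 1) → ℝ)} (hS : ∀ x ∈ S, 0 < x 0)
    {w : Fin (n + 1) → ℝ} (hw : w ∈ affineSpan ℝ S) (hw0 : 0 < w 0) :
    Gmap w ∈ affineSpan ℝ (Gmap '' S) := by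
  classical
  rw [← Subtype.range_coe (s := S)] at hw
  obtain ⟨F, c, hc, hrep⟩ := eq_affineCombination_of_mem_affineSpan hw
  rw [Finset.affineCombination_eq_linear_combination _ _ _ hc] at hrep
  have hcoord : ∀ i, w i = ∑ e ∈ F, c e * (e : Fin (n + 1) → ℝ) i := by
    intro i
    rw [hrep]
    simp [Finset.sum_apply]
  set c' : S → ℝ := fun e => c e * (e : Fin (n + 1) → ℝ) 0 / w 0 with hc'def
  have hc'1 : ∑ e ∈ F, c' e = 1 := by
    simp only [hc'def, ← Finset.sum_div, ← hcoord 0]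
    field_simp
  have hGrep : Gmap w = ∑ e ∈ F, c' e • Gmap (e : Fin (n + 1) → ℝ) := by
    funext i
    rw [Finset.sum_apply]
    rcases eq_or_ne i 0 with rfl | hi
    · have hterm : ∀ e ∈ F, (c' e • Gmap (e : Fin (n + 1) → ℝ)) 0 = c e / w 0 := by
        intro e _
        have he0 : (e : Fin (n + 1) → ℝ) 0 ≠ 0 := ne_of_gt (hS _ e.2)
        simp only [Pi.smul_apply, smul_eq_mul, Gmap, if_pos rfl, hc'def]
        field_simp
        simp
      rw [Finset.sum_congr rfl hterm, ← Finset.sum_div, hc]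
      simp [Gmap]
    · have hterm : ∀ e ∈ F,
          (c' e • Gmap (e : Fin (n + 1) → ℝ)) i = c e * (e : Fin (n + 1) → ℝ) i / w 0 := by
        intro e _
        have he0 : (e : Fin (n + 1) → ℝ) 0 ≠ 0 := ne_of_gt (hS _ e.2)
        simp only [Pi.smul_apply, smul_eq_mul, Gmap, if_neg hi, hc'def]
        field_simp
      rw [Finset.sum_congr rfl hterm, ← Finset.sum_div, ← hcoord i]
      simp [Gmap, if_neg hi]
  have hmem : Gmap w ∈ affineSpan ℝ (Set.range fun e : S => Gmap (e : Fin (n + 1) → ℝ)) := by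
    rw [hGrep, ← Finset.affineCombination_eq_linear_combination _ _ _ hc'1]
    exact affineCombination_mem_affineSpan hc'1 _
  have hrange : (Set.range fun e : S => Gmap (e : Fin (n + 1) → ℝ)) = Gmap '' S := by
    rw [show (fun e : S => Gmap (e : Fin (n + 1) → ℝ)) = Gmap ∘ (Subtype.val) from rfl,
      Set.range_comp, Subtype.range_coe]
  rwa [hrange] at hmem

lemma mem_intrinsicInterior_iff' {n : ℕ} {s : Set (Fin n → ℝ)} {x : Fin n → ℝ} :
    x ∈ intrinsicInterior ℝ s ↔
      x ∈ affineSpan ℝ s ∧ ∃ t, IsOpen t ∧ x ∈ t ∧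
        t ∩ (affineSpan ℝ s : Set (Fin n → ℝ)) ⊆ s := by
  constructor
  · rintro ⟨y, hy, rfl⟩
    obtain ⟨U, hUsub, hUopen, hyU⟩ := mem_interior.1 hy
    obtain ⟨t, ht, rfl⟩ := isOpen_induced_iff.1 hUopen
    refine ⟨y.2, t, ht, hyU, ?_⟩
    rintro z ⟨hzt, hz⟩
    exact hUsub (show (⟨z, hz⟩ : affineSpan ℝ s) ∈ _ from hzt)
  · rintro ⟨hx, t, ht, hxt, hts⟩
    refine ⟨⟨x, hx⟩, ?_, rfl⟩
    exact mem_interior.2 ⟨Subtype.val ⁻¹' t, fun z hz => hts ⟨hz, z.2⟩,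
      ht.preimage continuous_subtype_val, hxt⟩

lemma Gmap_persp {d : ℕ} {s : Fin (d + 2) → ℝ} (h0 : 0 < s 0) (h1 : 0 < s 1) :
    Gmap (persp (d + 1) s) = perspY d s := by
  funext i
  have hs0 : s 0 ≠ 0 := ne_of_gt h0
  have hs1 : s 1 ≠ 0 := ne_of_gt h1
  simp only [Gmap, persp, perspY, Fin.succ_zero_eq_one]
  rcases eq_or_ne i 0 with rfl | hi
  · simp only [if_pos rfl]
    field_simp
    simp
  · simp only [if_neg hi]
    field_simp

lemma persp_zero_pos {d : ℕ} {s : Fin (d + 2) → ℝ} (h0 : 0 < s 0) (h1 : 0 < s 1) :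
    0 < persp (d + 1) s 0 := by
  simp only [persp, Fin.succ_zero_eq_one]
  positivity

lemma perspY_zero_pos {d : ℕ} {s : Fin (d + 2) → ℝ} (h0 : 0 < s 0) (h1 : 0 < s 1) :
    0 < perspY d s 0 := by
  simp only [perspY, if_pos rfl]
  positivity

/-- Change-of-numeraire invariance of the local arbitrage-free property. -/
theorem change_numeraire_arbitrage_free {d : ℕ} (E : Set (Fin (d + 2) → ℝ))
    (hE : E ⊆ {s : Fin (d + 2) → ℝ | 0 < s 0 ∧ 0 < s 1})
    (s : Fin (d + 2) → ℝ) (hs : s ∈ E)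
    (h : persp (d + 1) s ∈ intrinsicInterior ℝ (convexHull ℝ (persp (d + 1) '' E))) :
    perspY d s ∈ intrinsicInterior ℝ (convexHull ℝ (perspY d '' E)) := by
  obtain ⟨hs0, hs1⟩ := hE hs
  -- positivity of the distinguished coordinate on both images
  have hXpos : ∀ x ∈ persp (d + 1) '' E, 0 < x 0 := by
    rintro x ⟨e, he, rfl⟩
    exact persp_zero_pos (hE he).1 (hE he).2
  have hYpos : ∀ x ∈ perspY d '' E, 0 < x 0 := by
    rintro x ⟨e, he, rfl⟩
    exact perspY_zero_pos (hE he).1 (hE he).2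
  -- the images correspond under Gmap
  have hYX : perspY d '' E = Gmap '' (persp (d + 1) '' E) := by
    rw [Set.image_image]
    exact Set.image_congr fun e he => (Gmap_persp (hE he).1 (hE he).2).symm
  have hXY : persp (d + 1) '' E = Gmap '' (perspY d '' E) := by
    rw [Set.image_image]
    refine Set.image_congr fun e he => ?_
    rw [← Gmap_persp (hE he).1 (hE he).2,
      Gmap_invol (ne_of_gt (persp_zero_pos (hE he).1 (hE he).2))]
  set x := persp (d + 1) s with hxdef
  have hx0 : 0 < x 0 := persp_zero_pos hs0 hs1
  have hGx : Gmap x = perspY d s := Gmap_persp hs0 hs1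
  rw [mem_intrinsicInterior_iff'] at h
  obtain ⟨hxspan, t, ht, hxt, hts⟩ := h
  rw [affineSpan_convexHull] at hxspan hts
  rw [mem_intrinsicInterior_iff', affineSpan_convexHull]
  constructor
  · rw [← hGx, hYX]
    exact Gmap_span hXpos hxspan hx0
  · refine ⟨{w | 0 < w 0} ∩ Gmap ⁻¹' t,
      Gmap_continuousOn.isOpen_inter_preimage (isOpen_lt continuous_const (continuous_apply 0)) ht,
      ⟨?_, ?_⟩, ?_⟩
    · rw [← hGx]; exact Gmap_zero_pos hx0
    · show Gmap (perspY d s) ∈ t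
      rw [← hGx, Gmap_invol (ne_of_gt hx0)]
      exact hxt
    · rintro w ⟨⟨hw0, hwt⟩, hwspan⟩
      have hGw_span : Gmap w ∈ affineSpan ℝ (persp (d + 1) '' E) := by
        rw [hXY]
        exact Gmap_span hYpos hwspan hw0
      have hGw_hull : Gmap w ∈ convexHull ℝ (persp (d + 1) '' E) := hts ⟨hwt, hGw_span⟩
      have := Gmap_hull hXpos hGw_hull
      rw [← hYX] at this
      have hw := this.2
      rwa [Gmap_invol (ne_of_gt hw0)] at hw
end

section
/- Change-of-numeraire invariance of the 0-neutral property: let E ⊆ {s ∈ ℝ^{d+1} : s^0 > 0, s^1 > 0} and s ∈ E. If X(s) ∈ cl(co(X(E))), then Y(s) ∈ cl(co(Y(E))), where X(s) = (s^1/s^0, s^2/s^0, ..., s^d/s^0) and Y(s) = (s^0/s^1, s^2/s^1, ..., s^d/s^1). -/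
/-- Change-of-numeraire invariance of the `0`-neutral property. -/
theorem change_numeraire_zero_neutral {d : ℕ} (E : Set (Fin (d + 2) → ℝ))
    (hE : E ⊆ {s : Fin (d + 2) → ℝ | 0 < s 0 ∧ 0 < s 1})
    (s : Fin (d + 2) → ℝ) (hs : s ∈ E)
    (h : persp (d + 1) s ∈ closure (convexHull ℝ (persp (d + 1) '' E))) :
    perspY d s ∈ closure (convexHull ℝ (perspY d '' E)) := by
  by_contra hcon
  obtain ⟨f, u, hfu, hup⟩ := geometric_hahn_banach_closed_point
    (Convex.closure (convex_convexHull ℝ _)) isClosed_closure hcon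
  -- the projective change-of-numeraire map
  set g : (Fin (d + 1) → ℝ) → (Fin (d + 1) → ℝ) :=
    fun z j => (if j = 0 then 1 else z j) / z 0 with hg
  set w : (Fin (d + 1) → ℝ) → (Fin (d + 1) → ℝ) :=
    fun z j => if j = 0 then 1 else z j with hw
  have hwg : ∀ z : Fin (d + 1) → ℝ, z 0 ≠ 0 → w z = z 0 • g z := by
    intro z hz; funext j
    simp only [hw, hg, Pi.smul_apply, smul_eq_mul]
    rw [mul_div_cancel₀ _ hz]
  have hgY : ∀ e ∈ E, g (persp (d + 1) e) = perspY d e := by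
    intro e he
    obtain ⟨h0, h1⟩ := hE he
    funext j
    simp only [hg, persp, perspY]
    have hsucc0 : (0 : Fin (d + 1)).succ = (1 : Fin (d + 2)) := rfl
    have h0' := h0.ne'
    have h1' := h1.ne'
    by_cases hj : j = 0
    · subst hj
      simp only [if_pos rfl, hsucc0, if_true, eq_self_iff_true]
      rw [one_div_div]
    · simp only [if_neg hj, hsucc0]
      field_simp
  have hX0 : ∀ e : Fin (d + 2) → ℝ, e ∈ E → 0 < persp (d + 1) e 0 := by
    intro e he
    obtain ⟨h0, h1⟩ := hE he
    have : persp (d + 1) e 0 = e 1 / e 0 := rfl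
    rw [this]
    exact div_pos h1 h0
  -- the affine half-space
  set C : Set (Fin (d + 1) → ℝ) := {z | f (w z) ≤ u * z 0} with hC
  have hCconv : Convex ℝ C := by
    intro z1 hz1 z2 hz2 a b ha hb hab
    have hwcomb : w (a • z1 + b • z2) = a • w z1 + b • w z2 := by
      funext j
      by_cases hj : j = 0
      · subst hj
        simp only [hw, if_pos rfl, Pi.add_apply, Pi.smul_apply, smul_eq_mul, if_true, eq_self_iff_true, mul_one]
        linarith
      · simp [hw, if_neg hj]
    simp only [hC, Set.mem_setOf_eq] at hz1 hz2 ⊢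
    rw [hwcomb, map_add, map_smul, map_smul]
    have : (a • z1 + b • z2) 0 = a * z1 0 + b * z2 0 := by simp
    rw [this]
    have h1 : a * f (w z1) ≤ a * (u * z1 0) := mul_le_mul_of_nonneg_left hz1 ha
    have h2 : b * f (w z2) ≤ b * (u * z2 0) := mul_le_mul_of_nonneg_left hz2 hb
    simp only [smul_eq_mul]
    nlinarith
  have hCclosed : IsClosed C := by
    have hcont : Continuous fun z : Fin (d + 1) → ℝ => f (w z) - u * z 0 := by
      apply Continuous.sub
      · apply f.continuous.comp
        apply continuous_pi
        intro j
        by_cases hj : j = 0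
        · subst hj; simpa [hw] using continuous_const
        · simpa [hw, if_neg hj] using continuous_apply j
      · exact (continuous_const).mul (continuous_apply 0)
    have : C = (fun z : Fin (d + 1) → ℝ => f (w z) - u * z 0) ⁻¹' (Set.Iic 0) := by
      ext z; simp [hC, sub_nonpos]
    rw [this]
    exact IsClosed.preimage hcont isClosed_Iic
  have hsub : persp (d + 1) '' E ⊆ C := by
    rintro _ ⟨e, he, rfl⟩
    have hz0 : 0 < persp (d + 1) e 0 := hX0 e he
    have hlt : f (g (persp (d + 1) e)) < u := by
      rw [hgY e he]
      exact hfu _ (subset_closure (subset_convexHull ℝ _ ⟨e, he, rfl⟩))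
    simp only [hC, Set.mem_setOf_eq]
    rw [hwg _ hz0.ne', map_smul, smul_eq_mul]
    calc persp (d + 1) e 0 * f (g (persp (d + 1) e))
        ≤ persp (d + 1) e 0 * u := mul_le_mul_of_nonneg_left hlt.le hz0.le
      _ = u * persp (d + 1) e 0 := mul_comm _ _
  have hmem : persp (d + 1) s ∈ C :=
    closure_minimal (convexHull_min hsub hCconv) hCclosed h
  have hz0 : 0 < persp (d + 1) s 0 := hX0 s hs
  simp only [hC, Set.mem_setOf_eq] at hmem
  rw [hwg _ hz0.ne', map_smul, smul_eq_mul] at hmem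
  rw [mul_comm u _] at hmem
  have hle : f (g (persp (d + 1) s)) ≤ u := le_of_mul_le_mul_left hmem hz0
  rw [hgY s hs] at hle
  exact absurd hle (not_le.mpr hup)
end
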